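/- If there exists a Boolean function f : {0,1}^n → {0,1} of degree d with block sensitivity b ≥ 1, then there exists τ ∈ {0,1} and a univariate real polynomial p of degree at most d with p(0) = 0, p(1) = 1, 0 ≤ p(k) ≤ 1 for all integers k with 2 ≤ k ≤ b−1, and p(b) = τ. -/

import Mathlib

open MvPolynomial Finset
open scoped Classical

/-- `bval` converts a boolean to the real number 0 or 1. -/
def bval (x : Bool) : ℝ := if x then 1 else 0

/-- `Represents P f` : `P` is the multilinear real polynomial representing the
Boolean function `f : {0,1}^n → {0,1}`. -/
def Represents {n : ℕ} (P : MvPolynomial (Fin n) ℝ) (f : (Fin n → Bool) → Bool) : Prop :=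
  (∀ m ∈ P.support, ∀ i, m i ≤ 1) ∧
  ∀ x : Fin n → Bool, MvPolynomial.eval (fun i => bval (x i)) P = bval (f x)

/-- Flip the `i`-th bit of `x`. -/
def flip1 {n : ℕ} (x : Fin n → Bool) (i : Fin n) : Fin n → Bool :=
  Function.update x i (!(x i))

/-- Coordinate `i` is relevant for `f`. -/
def Relevant {n : ℕ} (f : (Fin n → Bool) → Bool) (i : Fin n) : Prop :=
  ∃ x, f (flip1 x i) ≠ f x

/-- The set of relevant coordinates of `f`. -/
noncomputable def relSet {n : ℕ} (f : (Fin n → Bool) → Bool) : Finset (Fin n) :=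
  Finset.univ.filter fun i => Relevant f i

/-- The influence of coordinate `i` on `f`. -/
noncomputable def influence {n : ℕ} (f : (Fin n → Bool) → Bool) (i : Fin n) : ℝ :=
  ((Finset.univ.filter fun x => f (flip1 x i) ≠ f x).card : ℝ) / 2 ^ n

/-- `degI P i` : the maximal degree of a monomial of `P` containing `x i`. -/
noncomputable def degI {n : ℕ} (P : MvPolynomial (Fin n) ℝ) (i : Fin n) : ℕ :=
  (P.support.filter fun m => m i ≠ 0).sup fun m => m.sum fun _ e => e

/-- `W P f = Σ_{i ∈ R(f)} 2^{-deg_i(f)}`, computed via the representing polynomial `P`. -/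
noncomputable def W {n : ℕ} (P : MvPolynomial (Fin n) ℝ) (f : (Fin n → Bool) → Bool) : ℝ :=
  ∑ i ∈ relSet f, ((2:ℝ) ^ degI P i)⁻¹

/-- Flip the bits of `x` in the block `B`. -/
def flipB {n : ℕ} (x : Fin n → Bool) (B : Finset (Fin n)) : Fin n → Bool :=
  fun j => if j ∈ B then !(x j) else x j

/-- `f` has `b` pairwise disjoint sensitive blocks at some input. -/
def HasSensBlocks {n : ℕ} (f : (Fin n → Bool) → Bool) (b : ℕ) : Prop :=
  ∃ (x : Fin n → Bool) (B : Fin b → Finset (Fin n)),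
    (∀ j k, j ≠ k → Disjoint (B j) (B k)) ∧ ∀ j, f (flipB x (B j)) ≠ f x

/-- The block sensitivity of `f`. -/
noncomputable def bs {n : ℕ} (f : (Fin n → Bool) → Bool) : ℕ :=
  sSup {b | HasSensBlocks f b}

/-- Restriction of `f` fixing the coordinates in `H` according to `α`. -/
def restrict {n : ℕ} (f : (Fin n → Bool) → Bool) (H : Finset (Fin n)) (α : Fin n → Bool) :
    (Fin n → Bool) → Bool :=
  fun x => f fun i => if i ∈ H then α i else x i

/-- The multilinear monomial (exponent vector) with support `S`. -/
noncomputable def monOf {n : ℕ} (S : Finset (Fin n)) : Fin n →₀ ℕ :=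
  ∑ j ∈ S, Finsupp.single j 1

section Aux
variable {n b : ℕ}
variable (f : (Fin n → Bool) → Bool) (x : Fin n → Bool) (B : Fin b → Finset (Fin n))

def Xof (T : Finset (Fin b)) : Fin n → Bool := flipB x (T.biUnion B)

noncomputable def Gv (T : Finset (Fin b)) : ℝ :=
  if f x then 1 - bval (f (Xof x B T)) else bval (f (Xof x B T))

noncomputable def cS (S : Finset (Fin b)) : ℝ :=
  ∑ T ∈ S.powerset, (-1:ℝ)^(S.card - T.card) * Gv f x B T

lemma Gv_nonneg (T : Finset (Fin b)) : 0 ≤ Gv f x B T := by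
  unfold Gv bval; split_ifs <;> norm_num

lemma Gv_le_one (T : Finset (Fin b)) : Gv f x B T ≤ 1 := by
  unfold Gv bval; split_ifs <;> norm_num

lemma Gv_01 (T : Finset (Fin b)) : Gv f x B T = 0 ∨ Gv f x B T = 1 := by
  unfold Gv bval; split_ifs <;> norm_num

lemma Xof_empty : Xof x B ∅ = x := by
  funext i; simp [Xof, flipB]

lemma Xof_single (j : Fin b) : Xof x B {j} = flipB x (B j) := by
  funext i; simp [Xof, Finset.singleton_biUnion]

lemma Gv_empty : Gv f x B ∅ = 0 := by
  unfold Gv; rw [Xof_empty]; unfold bval; split_ifs <;> norm_num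

lemma Gv_single (j : Fin b) (hs : f (flipB x (B j)) ≠ f x) : Gv f x B {j} = 1 := by
  unfold Gv; rw [Xof_single]
  unfold bval
  rcases Bool.eq_false_or_eq_true (f x) with h | h <;>
    rcases Bool.eq_false_or_eq_true (f (flipB x (B j))) with h2 | h2 <;>
      simp [h, h2] at hs ⊢

end Aux

section Key
variable {n b : ℕ}

lemma neg_one_pow_sum' {α : Type*} [DecidableEq α] (s : Finset α) :
    ∑ t ∈ s.powerset, (-1:ℝ)^t.card = if s = ∅ then 1 else 0 := by
  have h := Finset.sum_powerset_neg_one_pow_card (x := s)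
  have h2 := congrArg (fun z : ℤ => (z : ℝ)) h
  push_cast at h2
  simpa using h2

lemma neg_one_pow_sub' {a c : ℕ} (h : c ≤ a) : (-1:ℝ)^(a-c) = (-1)^a * (-1)^c := by
  obtain ⟨e, rfl⟩ := Nat.exists_eq_add_of_le h
  have h1 : ((-1:ℝ)^c) * ((-1:ℝ)^c) = 1 := by
    rw [← pow_add, ← two_mul, pow_mul]; norm_num
  rw [Nat.add_sub_cancel_left, pow_add]
  calc (-1:ℝ)^e = ((-1:ℝ)^c * (-1:ℝ)^c) * (-1:ℝ)^e := by rw [h1, one_mul]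
    _ = (-1:ℝ)^c * (-1:ℝ)^e * (-1:ℝ)^c := by ring

lemma alt_sum_zero' {α : Type*} [DecidableEq α] (S : Finset α) (j : α) (hj : j ∈ S)
    (h : Finset α → ℝ) (hinv : ∀ T ∈ (S.erase j).powerset, h (insert j T) = h T) :
    ∑ T ∈ S.powerset, (-1:ℝ)^T.card * h T = 0 := by
  rw [← Finset.insert_erase hj,
    Finset.sum_powerset_insert (Finset.notMem_erase j S), ← Finset.sum_add_distrib]
  apply Finset.sum_eq_zero
  intro T hT
  have hjT : j ∉ T := fun hh => Finset.notMem_erase j S (Finset.mem_powerset.1 hT hh)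
  rw [Finset.card_insert_of_notMem hjT, hinv T hT, pow_succ]
  ring


lemma mobius_inv (G : Finset (Fin b) → ℝ) (S : Finset (Fin b)) :
    ∑ T ∈ S.powerset, (∑ U ∈ T.powerset, (-1:ℝ)^(T.card - U.card) * G U) = G S := by
  rw [Finset.sum_comm' (s' := fun U => S.powerset.filter (fun T => U ⊆ T)) (t' := S.powerset)
    (by
      intro T U
      simp only [Finset.mem_powerset, Finset.mem_filter]
      constructor
      · rintro ⟨h1, h2⟩; exact ⟨⟨h1, h2⟩, h2.trans h1⟩
      · rintro ⟨⟨h1, h2⟩, _⟩; exact ⟨h1, h2⟩)]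
  rw [Finset.sum_eq_single S]
  · -- U = S term
    rw [Finset.sum_eq_single S]
    · simp
    · intro T hT hTS
      simp only [Finset.mem_filter, Finset.mem_powerset] at hT
      exact absurd (Finset.Subset.antisymm hT.1 hT.2) hTS
    · intro h
      exact absurd (by simp [Finset.mem_filter]) h
  · intro U hU hUS
    rw [Finset.mem_powerset] at hU
    have key : ∑ T ∈ S.powerset.filter (fun T => U ⊆ T), (-1:ℝ)^(T.card - U.card) * G U
        = (∑ V ∈ (S \ U).powerset, (-1:ℝ)^V.card) * G U := by
      rw [Finset.sum_mul]
      apply Finset.sum_nbij' (fun T => T \ U) (fun V => U ∪ V)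
      · intro T hT
        simp only [Finset.mem_filter, Finset.mem_powerset] at hT ⊢
        exact Finset.sdiff_subset_sdiff hT.1 Finset.Subset.rfl
      · intro V hV
        simp only [Finset.mem_filter, Finset.mem_powerset] at hV ⊢
        constructor
        · exact Finset.union_subset hU (hV.trans (Finset.sdiff_subset))
        · exact Finset.subset_union_left
      · intro T hT
        simp only [Finset.mem_filter, Finset.mem_powerset] at hT
        exact Finset.union_sdiff_of_subset hT.2
      · intro V hV
        simp only [Finset.mem_powerset] at hV
        rw [Finset.union_sdiff_cancel_left]
        exact Finset.disjoint_sdiff.mono_right hV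
      · intro T hT
        simp only [Finset.mem_filter, Finset.mem_powerset] at hT
        rw [Finset.card_sdiff_of_subset hT.2]
    rw [key, neg_one_pow_sum', if_neg, zero_mul]
    intro h
    exact hUS (Finset.Subset.antisymm hU (by rwa [Finset.sdiff_eq_empty_iff_subset] at h))
  · intro h
    exact absurd (by simp) h

lemma cS_eq_zero (f : (Fin n → Bool) → Bool) (x : Fin n → Bool)
    (B : Fin b → Finset (Fin n)) (P : MvPolynomial (Fin n) ℝ)
    (hP : ∀ y : Fin n → Bool, MvPolynomial.eval (fun i => bval (y i)) P = bval (f y))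
    (hdisj : ∀ j k, j ≠ k → Disjoint (B j) (B k))
    (S : Finset (Fin b)) (hS : P.totalDegree < S.card) :
    cS f x B S = 0 := by
  have hSne : S ≠ ∅ := by
    intro h; rw [h] at hS; simp at hS
  -- main claim
  have h0 : ∑ T ∈ S.powerset, (-1:ℝ)^T.card * bval (f (Xof x B T)) = 0 := by
    have hev : ∀ T : Finset (Fin b), bval (f (Xof x B T)) =
        ∑ m ∈ P.support, MvPolynomial.coeff m P *
          ∏ i ∈ m.support, (bval (Xof x B T i)) ^ m i := by
      intro T
      rw [← hP (Xof x B T), MvPolynomial.eval_eq]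
    calc ∑ T ∈ S.powerset, (-1:ℝ)^T.card * bval (f (Xof x B T))
        = ∑ T ∈ S.powerset, ∑ m ∈ P.support, (-1:ℝ)^T.card *
            (MvPolynomial.coeff m P * ∏ i ∈ m.support, (bval (Xof x B T i)) ^ m i) := by
          apply Finset.sum_congr rfl; intro T _; rw [hev T, Finset.mul_sum]
      _ = ∑ m ∈ P.support, ∑ T ∈ S.powerset, (-1:ℝ)^T.card *
            (MvPolynomial.coeff m P * ∏ i ∈ m.support, (bval (Xof x B T i)) ^ m i) :=
          Finset.sum_comm
      _ = 0 := by
          apply Finset.sum_eq_zero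
          intro m hm
          -- find j0 ∈ S whose block avoids the support of m
          have hj0 : ∃ j0 ∈ S, ∀ i ∈ m.support, i ∉ B j0 := by
            by_contra hcon
            push_neg at hcon
            have hwit : ∀ j : {j // j ∈ S}, ∃ i : {i // i ∈ m.support}, (i : Fin n) ∈ B j := by
              rintro ⟨j, hj⟩
              obtain ⟨i, hi1, hi2⟩ := hcon j hj
              exact ⟨⟨i, hi1⟩, hi2⟩
            choose w hw using hwit
            have hwinj : Function.Injective w := by
              rintro ⟨j1, hj1⟩ ⟨j2, hj2⟩ hww
              by_contra hne
              have hne' : j1 ≠ j2 := fun h => hne (by simpa using h)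
              have := (hdisj j1 j2 hne').le_bot (Finset.mem_inter.2 ⟨hw ⟨j1, hj1⟩, hww ▸ hw ⟨j2, hj2⟩⟩)
              simp at this
            have hcard : S.card ≤ m.support.card := by
              have h1 := Fintype.card_le_of_injective w hwinj
              rwa [Fintype.card_coe, Fintype.card_coe] at h1
            have hdeg : m.support.card ≤ m.sum fun _ e => e := by
              rw [Finsupp.sum, Finset.card_eq_sum_ones]
              apply Finset.sum_le_sum
              intro i hi
              exact Nat.one_le_iff_ne_zero.2 (Finsupp.mem_support_iff.1 hi)
            have := (MvPolynomial.le_totalDegree hm)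
            omega
          obtain ⟨j0, hj0S, hj0B⟩ := hj0
          apply alt_sum_zero' S j0 hj0S
          intro T hT
          congr 1
          apply Finset.prod_congr rfl
          intro i hi
          have hiB : i ∉ B j0 := hj0B i hi
          have hmem : (i ∈ (insert j0 T).biUnion B) = (i ∈ T.biUnion B) := by
            simp only [Finset.mem_biUnion, Finset.mem_insert, eq_iff_iff]
            constructor
            · rintro ⟨j, (rfl | hj), hij⟩
              · exact absurd hij hiB
              · exact ⟨j, hj, hij⟩
            · rintro ⟨j, hj, hij⟩; exact ⟨j, Or.inr hj, hij⟩
          simp only [Xof, flipB, hmem]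
  unfold cS
  have hrw : ∀ T ∈ S.powerset, (-1:ℝ)^(S.card - T.card) * Gv f x B T
      = (-1:ℝ)^S.card * ((-1:ℝ)^T.card * Gv f x B T) := by
    intro T hT
    rw [neg_one_pow_sub' (Finset.card_le_card (Finset.mem_powerset.1 hT))]; ring
  rw [Finset.sum_congr rfl hrw, ← Finset.mul_sum]
  rcases Bool.eq_false_or_eq_true (f x) with hfx | hfx
  case _ =>
    have hg : ∀ T, Gv f x B T = 1 - bval (f (Xof x B T)) := by
      intro T; unfold Gv; rw [hfx]; simp
    simp only [hg]
    have hsplit : ∑ T ∈ S.powerset, (-1:ℝ)^T.card * (1 - bval (f (Xof x B T)))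
        = (∑ T ∈ S.powerset, (-1:ℝ)^T.card) -
          ∑ T ∈ S.powerset, (-1:ℝ)^T.card * bval (f (Xof x B T)) := by
      rw [← Finset.sum_sub_distrib]
      apply Finset.sum_congr rfl; intro T _; ring
    rw [hsplit, h0, neg_one_pow_sum', if_neg hSne, sub_zero, mul_zero]
  · have hg : ∀ T, Gv f x B T = bval (f (Xof x B T)) := by
      intro T; unfold Gv; rw [hfx]; simp
    simp only [hg]
    rw [h0, mul_zero]
end Key



lemma count_supersets {b : ℕ} (S : Finset (Fin b)) (k : ℕ) (hsk : S.card ≤ k) :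
    ((Finset.powersetCard k (Finset.univ : Finset (Fin b))).filter (fun T => S ⊆ T)).card
      = (b - S.card).choose (k - S.card) := by
  have h1 : ((Finset.univ : Finset (Fin b)) \ S).card = b - S.card := by
    rw [Finset.card_sdiff_of_subset (Finset.subset_univ S), Finset.card_univ, Fintype.card_fin]
  rw [← h1, ← Finset.card_powersetCard (k - S.card) ((Finset.univ : Finset (Fin b)) \ S)]
  apply Finset.card_nbij' (fun T => T \ S) (fun V => S ∪ V)
  · intro T hT
    simp only [Finset.mem_coe, Finset.mem_filter, Finset.mem_powersetCard] at hT
    obtain ⟨⟨_, hcard⟩, hsub⟩ := hT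
    rw [Finset.mem_coe, Finset.mem_powersetCard]
    exact ⟨Finset.sdiff_subset_sdiff (Finset.subset_univ T) Finset.Subset.rfl,
      by rw [Finset.card_sdiff_of_subset hsub, hcard]⟩
  · intro V hV
    rw [Finset.mem_coe, Finset.mem_powersetCard] at hV
    obtain ⟨hVsub, hVcard⟩ := hV
    have hdisj : Disjoint S V := Finset.disjoint_sdiff.mono_right hVsub
    simp only [Finset.mem_coe, Finset.mem_filter, Finset.mem_powersetCard]
    refine ⟨⟨Finset.subset_univ _, ?_⟩, Finset.subset_union_left⟩
    rw [Finset.card_union_of_disjoint hdisj, hVcard]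
    omega
  · intro T hT
    simp only [Finset.mem_coe, Finset.mem_filter, Finset.mem_powersetCard] at hT
    exact Finset.union_sdiff_of_subset hT.2
  · intro V hV
    rw [Finset.mem_coe, Finset.mem_powersetCard] at hV
    exact Finset.union_sdiff_cancel_left (Finset.disjoint_sdiff.mono_right hV.1)

section Eval
variable {n b : ℕ}

noncomputable def pPoly (f : (Fin n → Bool) → Bool) (x : Fin n → Bool)
    (B : Fin b → Finset (Fin n)) : Polynomial ℝ :=
  ∑ S ∈ (Finset.univ : Finset (Fin b)).powerset,
    Polynomial.C (cS f x B S / ((b.choose S.card) * Nat.factorial S.card : ℝ)) *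
      descPochhammer ℝ S.card

lemma eval_key (f : (Fin n → Bool) → Bool) (x : Fin n → Bool)
    (B : Fin b → Finset (Fin n)) (k : ℕ) (hk : k ≤ b) :
    (b.choose k : ℝ) * (pPoly f x B).eval (k : ℝ)
      = ∑ T ∈ Finset.powersetCard k (Finset.univ : Finset (Fin b)), Gv f x B T := by
  -- RHS via Möbius inversion and double counting
  have hRHS : ∑ T ∈ Finset.powersetCard k (Finset.univ : Finset (Fin b)), Gv f x B T
      = ∑ S ∈ (Finset.univ : Finset (Fin b)).powerset,
          (((Finset.powersetCard k (Finset.univ : Finset (Fin b))).filter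
            (fun T => S ⊆ T)).card : ℝ) * cS f x B S := by
    have h1 : ∀ T : Finset (Fin b), Gv f x B T = ∑ S ∈ T.powerset, cS f x B S := by
      intro T
      rw [← mobius_inv (Gv f x B) T]
      rfl
    calc ∑ T ∈ Finset.powersetCard k (Finset.univ : Finset (Fin b)), Gv f x B T
        = ∑ T ∈ Finset.powersetCard k (Finset.univ : Finset (Fin b)),
            ∑ S ∈ T.powerset, cS f x B S := Finset.sum_congr rfl (fun T _ => h1 T)
      _ = ∑ S ∈ (Finset.univ : Finset (Fin b)).powerset,
            ∑ T ∈ (Finset.powersetCard k (Finset.univ : Finset (Fin b))).filter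
              (fun T => S ⊆ T), cS f x B S := by
          apply Finset.sum_comm'
          intro T S
          simp only [Finset.mem_powersetCard, Finset.mem_powerset, Finset.mem_filter]
          constructor
          · rintro ⟨h1, h2⟩; exact ⟨⟨h1, h2⟩, Finset.subset_univ S⟩
          · rintro ⟨⟨h1, h2⟩, _⟩; exact ⟨h1, h2⟩
      _ = _ := by
          apply Finset.sum_congr rfl
          intro S _
          rw [Finset.sum_const, nsmul_eq_mul]
  rw [hRHS]
  unfold pPoly
  rw [Polynomial.eval_finset_sum, Finset.mul_sum]
  apply Finset.sum_congr rfl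
  intro S hS
  have hSb : S.card ≤ b := by
    have := Finset.card_le_card (Finset.mem_powerset.1 hS)
    simpa [Finset.card_univ] using this
  rw [Polynomial.eval_mul, Polynomial.eval_C, descPochhammer_eval_eq_descFactorial]
  by_cases hsk : S.card ≤ k
  · rw [count_supersets S k hsk]
    have hkey : ((b.choose k : ℕ) : ℝ) * ((k.choose S.card : ℕ) : ℝ)
        = ((b.choose S.card : ℕ) : ℝ) * (((b - S.card).choose (k - S.card) : ℕ) : ℝ) := by
      exact_mod_cast congrArg (Nat.cast : ℕ → ℝ) (Nat.choose_mul hsk)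
    have hdf : ((k.descFactorial S.card : ℕ) : ℝ)
        = (Nat.factorial S.card : ℝ) * ((k.choose S.card : ℕ) : ℝ) := by
      exact_mod_cast congrArg (Nat.cast : ℕ → ℝ)
        (Nat.descFactorial_eq_factorial_mul_choose k S.card)
    have hC0 : ((b.choose S.card : ℕ) : ℝ) ≠ 0 := by
      exact_mod_cast Nat.choose_pos hSb |>.ne'
    have hF0 : ((Nat.factorial S.card : ℕ) : ℝ) ≠ 0 := by
      exact_mod_cast (Nat.factorial_pos S.card).ne'
    rw [hdf]
    field_simp
    linear_combination (cS f x B S) * hkey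
  · push_neg at hsk
    have hdf0 : k.descFactorial S.card = 0 := Nat.descFactorial_eq_zero_iff_lt.2 hsk
    have hfil : (Finset.powersetCard k (Finset.univ : Finset (Fin b))).filter
        (fun T => S ⊆ T) = ∅ := by
      apply Finset.filter_false_of_mem
      intro T hT hsub
      rw [Finset.mem_powersetCard] at hT
      have := Finset.card_le_card hsub
      omega
    rw [hfil, hdf0]
    simp
end Eval


/-- if `f` has degree `d` and block sensitivity `b ≥ 1`, then there exist
`τ ∈ {0,1}` and a univariate real polynomial `p` of degree at most `d` with `p(0) = 0`,
`p(1) = 1`, `0 ≤ p(k) ≤ 1` for integers `2 ≤ k ≤ b-1`, and `p(b) = τ`. -/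
theorem stmt_8 {n : ℕ} (f : (Fin n → Bool) → Bool) (P : MvPolynomial (Fin n) ℝ)
    (hP : Represents P f) (d b : ℕ) (hd : P.totalDegree = d)
    (hb1 : 1 ≤ b) (hb : bs f = b) :
    ∃ τ : ℝ, (τ = 0 ∨ τ = 1) ∧
      ∃ p : Polynomial ℝ, p.natDegree ≤ d ∧
        p.eval 0 = 0 ∧ p.eval 1 = 1 ∧
        (∀ k : ℕ, 2 ≤ k → k ≤ b - 1 → 0 ≤ p.eval (k:ℝ) ∧ p.eval (k:ℝ) ≤ 1) ∧
        p.eval (b:ℝ) = τ := by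
  -- the set of block-sensitivity witnesses is bounded above and contains its sup
  have hbdd : BddAbove {m | HasSensBlocks f m} := by
    refine ⟨n, fun m hm => ?_⟩
    obtain ⟨x, B, hdisj, hsens⟩ := hm
    have hne : ∀ j, (B j).Nonempty := by
      intro j
      rcases Finset.eq_empty_or_nonempty (B j) with h | h
      · exfalso
        apply hsens j
        congr 1
        funext i
        simp [flipB, h]
      · exact h
    have hdisj' : ∀ j ∈ (Finset.univ : Finset (Fin m)), ∀ k ∈ (Finset.univ : Finset (Fin m)),
        j ≠ k → Disjoint (B j) (B k) := fun j _ k _ h => hdisj j k h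
    calc m = ∑ _j : Fin m, 1 := by simp
      _ ≤ ∑ j : Fin m, (B j).card := Finset.sum_le_sum fun j _ => Finset.card_pos.2 (hne j)
      _ = (Finset.univ.biUnion B).card := (Finset.card_biUnion hdisj').symm
      _ ≤ (Finset.univ : Finset (Fin n)).card := Finset.card_le_card (Finset.subset_univ _)
      _ = n := by simp
  have h0mem : HasSensBlocks f 0 :=
    ⟨fun _ => false, fun j => j.elim0, fun j => j.elim0, fun j => j.elim0⟩
  have hmem : HasSensBlocks f b := by
    have hne0 : {m | HasSensBlocks f m}.Nonempty := ⟨0, h0mem⟩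
    rw [← hb]
    exact Nat.sSup_mem hne0 hbdd
  obtain ⟨x, B, hdisj, hsens⟩ := hmem
  refine ⟨Gv f x B Finset.univ, Gv_01 f x B Finset.univ, pPoly f x B, ?_, ?_, ?_, ?_, ?_⟩
  · -- degree bound
    apply Polynomial.natDegree_sum_le_of_forall_le
    intro S _
    by_cases hSd : S.card ≤ d
    · calc (Polynomial.C (cS f x B S / ((b.choose S.card) * Nat.factorial S.card : ℝ)) *
            descPochhammer ℝ S.card).natDegree
          ≤ (descPochhammer ℝ S.card).natDegree := Polynomial.natDegree_C_mul_le _ _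
        _ = S.card := by simp [descPochhammer_natDegree]
        _ ≤ d := hSd
    · have hz : cS f x B S = 0 :=
        cS_eq_zero f x B P hP.2 hdisj S (by rw [hd]; omega)
      rw [hz]
      simp
  · -- p(0) = 0
    have h := eval_key f x B 0 (Nat.zero_le b)
    rw [Finset.powersetCard_zero, Finset.sum_singleton, Gv_empty] at h
    simpa using h
  · -- p(1) = 1
    have h := eval_key f x B 1 hb1
    have h1 : ∀ T ∈ Finset.powersetCard 1 (Finset.univ : Finset (Fin b)),
        Gv f x B T = 1 := by
      intro T hT
      rw [Finset.mem_powersetCard] at hT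
      obtain ⟨j, rfl⟩ := Finset.card_eq_one.1 hT.2
      exact Gv_single f x B j (hsens j)
    rw [Finset.sum_congr rfl h1, Finset.sum_const, nsmul_eq_mul, mul_one,
      Finset.card_powersetCard, Finset.card_univ, Fintype.card_fin,
      Nat.choose_one_right] at h
    have hbne : ((b:ℕ):ℝ) ≠ 0 := Nat.cast_ne_zero.2 (by omega)
    rw [Nat.cast_one] at h
    exact mul_left_cancel₀ hbne (h.trans (mul_one _).symm)
  · -- intermediate values
    intro k hk2 hkb
    have hkb' : k ≤ b := by omega
    have h := eval_key f x B k hkb'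
    have hpos : (0:ℝ) < (b.choose k : ℝ) := by exact_mod_cast Nat.choose_pos hkb'
    have hE : (pPoly f x B).eval (k:ℝ)
        = (∑ T ∈ Finset.powersetCard k (Finset.univ : Finset (Fin b)), Gv f x B T)
          / (b.choose k : ℝ) := by
      rw [eq_div_iff hpos.ne', mul_comm]
      exact h
    have hs0 : 0 ≤ ∑ T ∈ Finset.powersetCard k (Finset.univ : Finset (Fin b)),
        Gv f x B T := Finset.sum_nonneg fun T _ => Gv_nonneg f x B T
    have hs1 : (∑ T ∈ Finset.powersetCard k (Finset.univ : Finset (Fin b)),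
        Gv f x B T) ≤ (b.choose k : ℝ) := by
      calc (∑ T ∈ Finset.powersetCard k (Finset.univ : Finset (Fin b)), Gv f x B T)
          ≤ ∑ _T ∈ Finset.powersetCard k (Finset.univ : Finset (Fin b)), (1:ℝ) :=
            Finset.sum_le_sum fun T _ => Gv_le_one f x B T
        _ = ((Finset.powersetCard k (Finset.univ : Finset (Fin b))).card : ℝ) := by
            rw [Finset.sum_const, nsmul_eq_mul, mul_one]
        _ = (b.choose k : ℝ) := by
            rw [Finset.card_powersetCard, Finset.card_univ, Fintype.card_fin]
    constructor
    · rw [hE]; exact div_nonneg hs0 hpos.le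
    · rw [hE]; exact (div_le_one hpos).2 hs1
  · -- p(b) = τ
    have h := eval_key f x B b le_rfl
    have huniv : Finset.powersetCard b (Finset.univ : Finset (Fin b))
        = {(Finset.univ : Finset (Fin b))} := by
      have hc := Finset.powersetCard_self (Finset.univ : Finset (Fin b))
      rwa [Finset.card_univ, Fintype.card_fin] at hc
    rw [huniv, Finset.sum_singleton, Nat.choose_self, Nat.cast_one, one_mul] at h
    exact h
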